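/- arXiv:2203.16340 — 2 statements merged into one kernel-verified Lean document; each statement's English description precedes it below -/
import Mathlib

section
/- Let f : ℝⁿ → ℝ be differentiable with L-Lipschitz continuous gradient (L > 0), let c > 0, ε > 0, and let x, p, d ∈ ℝⁿ satisfy d ≠ 0, ⟨∇f(x), p⟩ ≤ −c‖d‖², ‖p‖ ≤ ‖d‖, and ε/‖d‖_∞ ≤ c/L. Then, taking the step size α = ε/‖d‖_∞, one has f(x + αp) ≤ f(x) − (ε/‖d‖_∞)(c/2)‖d‖² ≤ f(x) − (εc/2)‖d‖. -/
open scoped RealInnerProductSpace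

/-- The maximum (infinity) norm of a vector in `ℝⁿ`. -/
noncomputable def supNorm {n : ℕ} (v : Fin n → ℝ) : ℝ := ⨆ i, |v i|

lemma descent_aux {n : ℕ} (f : EuclideanSpace ℝ (Fin n) → ℝ) (L : ℝ)
    (hf : Differentiable ℝ f)
    (hlip : ∀ x y, ‖gradient f x - gradient f y‖ ≤ L * ‖x - y‖)
    (x v : EuclideanSpace ℝ (Fin n)) :
    f (x + v) ≤ f x + ⟪gradient f x, v⟫ + L / 2 * ‖v‖ ^ 2 := by
  set g : ℝ → ℝ := fun t => f (x + t • v) - t * ⟪gradient f x, v⟫ - L / 2 * t ^ 2 * ‖v‖ ^ 2 with hg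
  have hderiv : ∀ t : ℝ, HasDerivAt g
      (⟪gradient f (x + t • v), v⟫ - ⟪gradient f x, v⟫ - L / 2 * (2 * t) * ‖v‖ ^ 2) t := by
    intro t
    have h1 : HasDerivAt (fun t : ℝ => x + t • v) v t := by
      simpa using ((hasDerivAt_id t).smul_const v).const_add x
    have h2 : HasFDerivAt f (InnerProductSpace.toDual ℝ _ (gradient f (x + t • v))) (x + t • v) :=
      (hf (x + t • v)).hasGradientAt.hasFDerivAt
    have h3 : HasDerivAt (fun t : ℝ => f (x + t • v)) ⟪gradient f (x + t • v), v⟫ t := by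
      have := h2.comp_hasDerivAt t h1
      simp only [InnerProductSpace.toDual_apply_apply] at this
      exact this
    have h4 : HasDerivAt (fun t : ℝ => t * ⟪gradient f x, v⟫) ⟪gradient f x, v⟫ t := by
      simpa using (hasDerivAt_id t).mul_const (⟪gradient f x, v⟫ : ℝ)
    have h5 : HasDerivAt (fun t : ℝ => L / 2 * t ^ 2 * ‖v‖ ^ 2) (L / 2 * (2 * t) * ‖v‖ ^ 2) t := by
      have := ((hasDerivAt_pow 2 t).const_mul (L / 2)).mul_const (‖v‖ ^ 2)
      simpa [mul_comm, mul_assoc, mul_left_comm] using this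
    exact (h3.sub h4).sub h5
  have hmono : g 1 ≤ g 0 := by
    have : AntitoneOn g (Set.Icc 0 1) := by
      apply antitoneOn_of_deriv_nonpos (convex_Icc 0 1)
      · exact fun t _ => ((hderiv t).continuousAt).continuousWithinAt
      · exact fun t _ => ((hderiv t).differentiableAt).differentiableWithinAt
      · intro t ht
        rw [(hderiv t).deriv]
        rw [interior_Icc, Set.mem_Ioo] at ht
        have cs : ⟪gradient f (x + t • v) - gradient f x, v⟫ ≤ L * t * ‖v‖ ^ 2 := by
          calc ⟪gradient f (x + t • v) - gradient f x, v⟫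
              ≤ ‖gradient f (x + t • v) - gradient f x‖ * ‖v‖ := real_inner_le_norm _ _
            _ ≤ (L * ‖(x + t • v) - x‖) * ‖v‖ := by
                gcongr; exact hlip _ _
            _ = L * t * ‖v‖ ^ 2 := by
                simp [norm_smul, abs_of_pos ht.1]; ring
        rw [inner_sub_left] at cs
        nlinarith
    exact this ⟨le_refl 0, zero_le_one⟩ ⟨zero_le_one, le_refl 1⟩ zero_le_one
  simp only [hg, one_smul, zero_smul, add_zero, one_pow, one_mul, zero_pow, mul_zero,
    zero_mul, sub_zero, ne_eq, OfNat.ofNat_ne_zero, not_false_iff] at hmono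
  linarith

theorem stmt7 {n : ℕ} (hn : 1 ≤ n) (f : EuclideanSpace ℝ (Fin n) → ℝ) (L c ε : ℝ)
    (hL : 0 < L) (hf : Differentiable ℝ f)
    (hlip : ∀ x y : EuclideanSpace ℝ (Fin n),
      ‖gradient f x - gradient f y‖ ≤ L * ‖x - y‖)
    (hc : 0 < c) (hε : 0 < ε) (x p d : EuclideanSpace ℝ (Fin n)) (hd : d ≠ 0)
    (hdesc : ⟪gradient f x, p⟫ ≤ -c * ‖d‖ ^ 2) (hpd : ‖p‖ ≤ ‖d‖)
    (hstep : ε / supNorm (fun i => d i) ≤ c / L) :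
    f (x + (ε / supNorm (fun i => d i)) • p) ≤
        f x - ε / supNorm (fun i => d i) * (c / 2) * ‖d‖ ^ 2 ∧
      f x - ε / supNorm (fun i => d i) * (c / 2) * ‖d‖ ^ 2 ≤
        f x - ε * c / 2 * ‖d‖ := by
  set s : ℝ := supNorm (fun i => d i) with hs
  -- s > 0
  obtain ⟨i, hi⟩ : ∃ i, d i ≠ 0 := by
    by_contra h
    push_neg at h
    exact hd (by ext j; simpa using h j)
  have hbdd : BddAbove (Set.range fun i => |d i|) := (Set.finite_range _).bddAbove
  have hspos : 0 < s := lt_of_lt_of_le (abs_pos.mpr hi) (le_ciSup hbdd i)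
  -- s ≤ ‖d‖
  have hcoord : ∀ j, |d j| ≤ ‖d‖ := by
    intro j
    rw [EuclideanSpace.norm_eq]
    have h1 : |d j| = Real.sqrt (|d j| ^ 2) := by
      rw [Real.sqrt_sq_eq_abs, abs_abs]
    rw [h1]
    apply Real.sqrt_le_sqrt
    simp only [Real.norm_eq_abs]
    exact Finset.single_le_sum (f := fun k => |d k| ^ 2) (fun k _ => by positivity)
      (Finset.mem_univ j)
  haveI : Nonempty (Fin n) := ⟨i⟩
  have hsle : s ≤ ‖d‖ := ciSup_le hcoord
  set α : ℝ := ε / s with ha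
  have hα : 0 < α := div_pos hε hspos
  have hαL : α * L ≤ c := by
    rw [div_le_div_iff₀ hspos hL] at hstep
    calc α * L = ε / s * L := rfl
      _ ≤ c := by rw [div_mul_eq_mul_div, div_le_iff₀ hspos]; linarith
  have hdn : 0 < ‖d‖ := norm_pos_iff.mpr hd
  have key := descent_aux f L hf hlip x (α • p)
  rw [real_inner_smul_right, norm_smul, Real.norm_eq_abs, abs_of_pos hα] at key
  constructor
  · have hp0 : (0:ℝ) ≤ ‖p‖ := norm_nonneg p
    have h1 : α * ⟪gradient f x, p⟫ ≤ α * (-c * ‖d‖ ^ 2) := by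
      exact mul_le_mul_of_nonneg_left hdesc hα.le
    have h2 : L / 2 * (α * ‖p‖) ^ 2 ≤ α * (c/2) * ‖d‖ ^ 2 := by
      have hpp : ‖p‖ ^ 2 ≤ ‖d‖ ^ 2 := pow_le_pow_left₀ hp0 hpd 2
      have : (α * ‖p‖) ^ 2 ≤ α ^ 2 * ‖d‖ ^ 2 := by
        rw [mul_pow]; nlinarith [sq_nonneg α]
      nlinarith
    calc f (x + α • p) ≤ f x + α * ⟪gradient f x, p⟫ + L / 2 * (α * ‖p‖) ^ 2 := key
      _ ≤ f x + α * (-c * ‖d‖ ^ 2) + α * (c/2) * ‖d‖ ^ 2 := by linarith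
      _ = f x - α * (c / 2) * ‖d‖ ^ 2 := by ring
  · have h : ε ≤ α * ‖d‖ := by
      rw [ha, div_mul_eq_mul_div, le_div_iff₀ hspos]
      nlinarith
    nlinarith [mul_le_mul_of_nonneg_right h (by positivity : (0:ℝ) ≤ c / 2 * ‖d‖)]
end

section
/- Let f : ℝⁿ → ℝ be differentiable with L-Lipschitz continuous gradient (L > 0), let ε > 0 and 0 < c ≤ C. Let x ∈ ℝⁿ, S ⊆ {1,…,n}, and let M be a symmetric real matrix indexed by S × S with c‖v‖² ≤ vᵀ M v ≤ C‖v‖² for all vectors v indexed by S. Let d ∈ ℝⁿ satisfy d_i = 0 for i ∉ S and M d[S] = −∇f(x)[S], assume d ≠ 0, and let p ∈ ℝⁿ satisfy ⟨∇f(x), p⟩ ≤ −c‖d‖² and |p_i| ≤ |d_i| for all i. If ‖∇f(x)[S]‖ ≥ ε, then for the step size α = min(c/L, ε/‖d‖_∞) one has f(x + αp) ≤ f(x) − min(c²ε²/(2LC²), ε²c/(2C)). -/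
open scoped RealInnerProductSpace
open Matrix

lemma inner_gradient {F : Type*} [NormedAddCommGroup F] [InnerProductSpace ℝ F]
    [CompleteSpace F] (f : F → ℝ) (y w : F) :
    ⟪gradient f y, w⟫ = fderiv ℝ f y w := by
  rw [gradient, ← InnerProductSpace.toDual_apply_apply, LinearIsometryEquiv.apply_symm_apply]

lemma descent_lemma {F : Type*} [NormedAddCommGroup F] [InnerProductSpace ℝ F]
    [CompleteSpace F] (f : F → ℝ) (L : ℝ) (hf : Differentiable ℝ f)
    (hlip : ∀ x y, ‖gradient f x - gradient f y‖ ≤ L * ‖x - y‖) (x v : F) :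
    f (x + v) ≤ f x + ⟪gradient f x, v⟫ + L / 2 * ‖v‖ ^ 2 := by
  set g : ℝ → ℝ := fun t => f (x + t • v) - t * ⟪gradient f x, v⟫ - L / 2 * ‖v‖ ^ 2 * t ^ 2 with hg
  have key : ∀ t : ℝ, HasDerivAt g
      (⟪gradient f (x + t • v), v⟫ - ⟪gradient f x, v⟫ - L * ‖v‖ ^ 2 * t) t := by
    intro t
    have hc : HasDerivAt (fun t : ℝ => x + t • v) v t := by
      simpa using ((hasDerivAt_id t).smul_const v).const_add x
    have h1 : HasDerivAt (fun t : ℝ => f (x + t • v)) (fderiv ℝ f (x + t • v) v) t :=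
      (hf _).hasFDerivAt.comp_hasDerivAt t hc
    have h2 : HasDerivAt (fun t : ℝ => t * ⟪gradient f x, v⟫) ⟪gradient f x, v⟫ t := by
      simpa using (hasDerivAt_id t).mul_const (⟪gradient f x, v⟫ : ℝ)
    have h3 : HasDerivAt (fun t : ℝ => L / 2 * ‖v‖ ^ 2 * t ^ 2)
        (L / 2 * ‖v‖ ^ 2 * (2 * t)) t := by
      simpa using (hasDerivAt_pow 2 t).const_mul (L / 2 * ‖v‖ ^ 2)
    have h4 := (h1.sub h2).sub h3
    exact h4.congr_deriv (by rw [inner_gradient, inner_gradient]; ring)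
  have hanti : AntitoneOn g (Set.Icc (0:ℝ) 1) := by
    apply antitoneOn_of_deriv_nonpos (convex_Icc 0 1)
    · exact fun t _ => (key t).differentiableAt.continuousAt.continuousWithinAt
    · exact fun t _ => (key t).differentiableAt.differentiableWithinAt
    · intro t ht
      rw [interior_Icc] at ht
      rw [(key t).deriv]
      have hb : ⟪gradient f (x + t • v) - gradient f x, v⟫ ≤ L * ‖v‖ ^ 2 * t := by
        calc ⟪gradient f (x + t • v) - gradient f x, v⟫
            ≤ ‖gradient f (x + t • v) - gradient f x‖ * ‖v‖ := real_inner_le_norm _ _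
          _ ≤ (L * ‖(x + t • v) - x‖) * ‖v‖ := by
              apply mul_le_mul_of_nonneg_right (hlip _ _) (norm_nonneg _)
          _ = L * ‖v‖ ^ 2 * t := by
              rw [add_sub_cancel_left, norm_smul, Real.norm_eq_abs, abs_of_pos ht.1]
              ring
      rw [inner_sub_left] at hb
      linarith
  have h01 : g 1 ≤ g 0 := hanti (Set.mem_Icc.2 ⟨le_refl 0, zero_le_one⟩)
    (Set.mem_Icc.2 ⟨zero_le_one, le_refl 1⟩) zero_le_one
  simp only [hg, one_smul, zero_smul, add_zero, one_mul, one_pow, mul_one, zero_pow,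
    mul_zero, sub_zero, zero_mul] at h01
  linarith

set_option maxHeartbeats 1000000 in
theorem stmt8 {n : ℕ} (hn : 1 ≤ n) (f : EuclideanSpace ℝ (Fin n) → ℝ) (L ε c C : ℝ)
    (hL : 0 < L) (hf : Differentiable ℝ f)
    (hlip : ∀ x y : EuclideanSpace ℝ (Fin n),
      ‖gradient f x - gradient f y‖ ≤ L * ‖x - y‖)
    (hε : 0 < ε) (hc : 0 < c) (hcC : c ≤ C)
    (x : EuclideanSpace ℝ (Fin n)) (S : Finset (Fin n)) (M : Matrix S S ℝ)
    (hsymm : M.IsSymm)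
    (hlb : ∀ v : S → ℝ, c * (∑ i, v i ^ 2) ≤ v ⬝ᵥ M.mulVec v)
    (hub : ∀ v : S → ℝ, v ⬝ᵥ M.mulVec v ≤ C * (∑ i, v i ^ 2))
    (d : EuclideanSpace ℝ (Fin n)) (hd0 : ∀ i, i ∉ S → d i = 0)
    (heq : M.mulVec (fun i : S => d i) = fun i : S => -(gradient f x i))
    (hd : d ≠ 0) (p : EuclideanSpace ℝ (Fin n))
    (hdesc : ⟪gradient f x, p⟫ ≤ -c * ‖d‖ ^ 2)
    (hpd : ∀ i, |p i| ≤ |d i|)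
    (hgrad : ε ≤ Real.sqrt (∑ i ∈ S, gradient f x i ^ 2)) :
    f (x + min (c / L) (ε / supNorm (fun i => d i)) • p) ≤
      f x - min (c ^ 2 * ε ^ 2 / (2 * L * C ^ 2)) (ε ^ 2 * c / (2 * C)) := by
  have hC : 0 < C := hc.trans_le hcC
  have : Nonempty (Fin n) := ⟨⟨0, hn⟩⟩
  -- coordinate bound
  have coord_le : ∀ (v : EuclideanSpace ℝ (Fin n)) (i : Fin n), |v i| ≤ ‖v‖ := by
    intro v i
    rw [EuclideanSpace.norm_eq]
    have h1 : |v i| = Real.sqrt (|v i| ^ 2) := by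
      rw [Real.sqrt_sq (abs_nonneg _)]
    rw [h1]
    apply Real.sqrt_le_sqrt
    have := Finset.single_le_sum (f := fun j => ‖v j‖ ^ 2)
      (fun j _ => by positivity) (Finset.mem_univ i)
    simpa [Real.norm_eq_abs] using this
  set m := supNorm (fun i => d i) with hm
  set D := ‖d‖ with hDdef
  have hD : 0 < D := norm_pos_iff.2 hd
  clear_value D
  have hbdd : BddAbove (Set.range fun i => |d i|) := (Set.finite_range _).bddAbove
  have hmD : m ≤ D := by
    rw [hm, hDdef, supNorm]; exact ciSup_le fun i => coord_le d i
  have hmpos : 0 < m := by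
    obtain ⟨i, hi⟩ : ∃ i, d i ≠ 0 := by
      by_contra h
      push_neg at h
      exact hd (by ext i; exact h i)
    have : |d i| ≤ m := le_ciSup hbdd i
    have : 0 < |d i| := abs_pos.2 hi
    linarith [le_ciSup hbdd i]
  -- ‖d‖² as a sum over S
  have hD2 : D ^ 2 = ∑ i ∈ S, d i ^ 2 := by
    rw [hDdef, EuclideanSpace.norm_eq, Real.sq_sqrt (by positivity)]
    rw [← Finset.sum_subset (Finset.subset_univ S)
      (fun i _ hi => by simp [hd0 i hi])]
    simp [Real.norm_eq_abs, sq_abs]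
  -- symmetric bilinear form facts
  have hsB : ∀ u w : S → ℝ, u ⬝ᵥ M.mulVec w = w ⬝ᵥ M.mulVec u := by
    intro u w
    rw [Matrix.dotProduct_mulVec]
    conv_lhs => rw [← hsymm.eq]
    rw [Matrix.vecMul_transpose, dotProduct_comm]
  have hcs : ∀ u w : S → ℝ,
      (u ⬝ᵥ M.mulVec w) ^ 2 ≤ (u ⬝ᵥ M.mulVec u) * (w ⬝ᵥ M.mulVec w) := by
    intro u w
    have hq : ∀ t : ℝ, 0 ≤ (w ⬝ᵥ M.mulVec w) * (t * t) + (2 * (u ⬝ᵥ M.mulVec w)) * t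
        + (u ⬝ᵥ M.mulVec u) := by
      intro t
      have h0 : (0:ℝ) ≤ (u + t • w) ⬝ᵥ M.mulVec (u + t • w) := by
        refine le_trans ?_ (hlb (u + t • w))
        positivity
      have hexp : (u + t • w) ⬝ᵥ M.mulVec (u + t • w)
          = u ⬝ᵥ M.mulVec u + t * (u ⬝ᵥ M.mulVec w)
            + (t * (w ⬝ᵥ M.mulVec u) + t ^ 2 * (w ⬝ᵥ M.mulVec w)) := by
        simp [Matrix.mulVec_add, Matrix.mulVec_smul, dotProduct_add, add_dotProduct,
          dotProduct_smul, smul_dotProduct, smul_eq_mul]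
        ring
      rw [hexp, hsB w u] at h0
      nlinarith [h0]
    have hdisc := discrim_le_zero hq
    rw [discrim] at hdisc
    nlinarith [hdisc]
  -- the key bound: ε ≤ C * D
  have hεCD : ε ≤ C * D := by
    set dS : S → ℝ := fun i : S => d i with hdS
    set w : S → ℝ := M.mulVec dS with hw
    have hq : ∑ i ∈ S, gradient f x i ^ 2 = w ⬝ᵥ w := by
      rw [← Finset.sum_coe_sort S (fun i => gradient f x i ^ 2), heq]
      simp [dotProduct, sq]
    have hr : ∑ i : S, dS i ^ 2 = D ^ 2 := by
      rw [hD2, ← Finset.sum_coe_sort S (fun i => d i ^ 2)]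
    have hww : w ⬝ᵥ w = ∑ i, w i ^ 2 := by simp [dotProduct, sq]
    have hqw : w ⬝ᵥ w = dS ⬝ᵥ M.mulVec w := by
      rw [hsB dS w, hw]
    have h1 : (dS ⬝ᵥ M.mulVec w) ^ 2 ≤ (dS ⬝ᵥ M.mulVec dS) * (w ⬝ᵥ M.mulVec w) := hcs dS w
    have h2 : dS ⬝ᵥ M.mulVec dS ≤ C * D ^ 2 := by rw [← hr]; exact hub dS
    have h3 : w ⬝ᵥ M.mulVec w ≤ C * (w ⬝ᵥ w) := by rw [hww]; exact hub w
    have h4 : 0 ≤ dS ⬝ᵥ M.mulVec dS := le_trans (by positivity) (hlb dS)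
    have h5 : 0 ≤ w ⬝ᵥ w := by rw [hww]; positivity
    have hqpos : 0 < w ⬝ᵥ w := by
      rcases lt_or_eq_of_le h5 with h | h
      · exact h
      · exfalso
        have : Real.sqrt (∑ i ∈ S, gradient f x i ^ 2) = 0 := by
          rw [hq, ← h, Real.sqrt_zero]
        linarith [hgrad, this]
    -- (w⬝w)^2 ≤ C^2 D^2 (w⬝w)
    have hkey : (w ⬝ᵥ w) ^ 2 ≤ C ^ 2 * D ^ 2 * (w ⬝ᵥ w) := by
      calc (w ⬝ᵥ w) ^ 2 = (dS ⬝ᵥ M.mulVec w) ^ 2 := by rw [← hqw]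
        _ ≤ (dS ⬝ᵥ M.mulVec dS) * (w ⬝ᵥ M.mulVec w) := h1
        _ ≤ (C * D ^ 2) * (C * (w ⬝ᵥ w)) := by
            apply mul_le_mul h2 h3 (le_trans (by positivity) (hlb w)) (by positivity)
        _ = C ^ 2 * D ^ 2 * (w ⬝ᵥ w) := by ring
    have hle : w ⬝ᵥ w ≤ C ^ 2 * D ^ 2 := by
      nlinarith [hkey, hqpos]
    have : Real.sqrt (∑ i ∈ S, gradient f x i ^ 2) ≤ C * D := by
      rw [hq]
      have : Real.sqrt (w ⬝ᵥ w) ≤ Real.sqrt (C ^ 2 * D ^ 2) := Real.sqrt_le_sqrt hle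
      rwa [show C ^ 2 * D ^ 2 = (C * D) ^ 2 by ring, Real.sqrt_sq (by positivity)] at this
    linarith [hgrad]
  -- norm of p
  have hpD : ‖p‖ ≤ D := by
    rw [hDdef, EuclideanSpace.norm_eq, EuclideanSpace.norm_eq]
    apply Real.sqrt_le_sqrt
    apply Finset.sum_le_sum
    intro i _
    rw [Real.norm_eq_abs, Real.norm_eq_abs]
    exact pow_le_pow_left₀ (abs_nonneg _) (hpd i) 2
  set α := min (c / L) (ε / m) with hα
  clear_value α
  have hα1 : α ≤ c / L := by rw [hα]; exact min_le_left _ _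
  have hα2 : α ≤ ε / m := by rw [hα]; exact min_le_right _ _
  have hαpos : 0 < α := by
    rw [hα]; exact lt_min (by positivity) (by positivity)
  -- descent lemma
  have hdl := descent_lemma f L hf hlip x (α • p)
  have hinner : ⟪gradient f x, α • p⟫ = α * ⟪gradient f x, p⟫ := real_inner_smul_right _ _ _
  have hnsm : ‖α • p‖ ^ 2 = α ^ 2 * ‖p‖ ^ 2 := by
    rw [norm_smul, Real.norm_eq_abs, mul_pow, sq_abs]
  rw [hinner, hnsm] at hdl
  have hstep : f (x + α • p) ≤ f x - α * c * D ^ 2 + L / 2 * α ^ 2 * D ^ 2 := by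
    have h1 : α * ⟪gradient f x, p⟫ ≤ α * (-c * D ^ 2) :=
      mul_le_mul_of_nonneg_left hdesc hαpos.le
    have h2 : L / 2 * (α ^ 2 * ‖p‖ ^ 2) ≤ L / 2 * (α ^ 2 * D ^ 2) := by
      apply mul_le_mul_of_nonneg_left _ (by positivity)
      apply mul_le_mul_of_nonneg_left _ (by positivity)
      exact pow_le_pow_left₀ (norm_nonneg _) hpD 2
    calc f (x + α • p) ≤ f x + α * ⟪gradient f x, p⟫ + L / 2 * (α ^ 2 * ‖p‖ ^ 2) := by
          exact hdl
      _ ≤ f x + α * (-c * D ^ 2) + L / 2 * (α ^ 2 * D ^ 2) := by linarith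
      _ = f x - α * c * D ^ 2 + L / 2 * α ^ 2 * D ^ 2 := by ring
  -- arithmetic
  have hLα : α * L ≤ c := (le_div_iff₀ hL).1 hα1
  have hhalf : c / 2 * α * D ^ 2 ≤ α * c * D ^ 2 - L / 2 * α ^ 2 * D ^ 2 := by
    nlinarith [mul_nonneg (mul_nonneg hαpos.le (sq_nonneg D)) (sub_nonneg.2 hLα)]
  have hεsq : ε ^ 2 ≤ C ^ 2 * D ^ 2 := by nlinarith [hεCD, hε.le]
  have hbound : min (c ^ 2 * ε ^ 2 / (2 * L * C ^ 2)) (ε ^ 2 * c / (2 * C))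
      ≤ c / 2 * α * D ^ 2 := by
    rcases min_cases (c / L) (ε / m) with ⟨hmin, _⟩ | ⟨hmin, _⟩
    · have hαeq : α = c / L := by rw [hα]; exact hmin
      have e1 : c ^ 2 * ε ^ 2 / (2 * L * C ^ 2) ≤ c ^ 2 * (C ^ 2 * D ^ 2) / (2 * L * C ^ 2) := by
        gcongr
      have e2 : c ^ 2 * (C ^ 2 * D ^ 2) / (2 * L * C ^ 2) = c / 2 * (c / L) * D ^ 2 := by
        field_simp
      calc min (c ^ 2 * ε ^ 2 / (2 * L * C ^ 2)) (ε ^ 2 * c / (2 * C))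
          ≤ c ^ 2 * ε ^ 2 / (2 * L * C ^ 2) := min_le_left _ _
        _ ≤ c / 2 * (c / L) * D ^ 2 := by rw [← e2]; exact e1
        _ = c / 2 * α * D ^ 2 := by rw [hαeq]
    · have hαeq : α = ε / m := by rw [hα]; exact hmin
      have s1 : ε / D ≤ ε / m := by gcongr
      have s2 : c / 2 * (ε / D) * D ^ 2 = c / 2 * ε * D := by field_simp
      have s3 : ε ^ 2 * c / (2 * C) ≤ c / 2 * ε * D := by
        have e3 : ε ^ 2 * c / (2 * C) = c / 2 * ε * (ε / C) := by field_simp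
        have e4 : ε / C ≤ D := by rw [div_le_iff₀ hC]; nlinarith [hεCD]
        rw [e3]; gcongr
      have s5 : c / 2 * (ε / D) * D ^ 2 ≤ c / 2 * (ε / m) * D ^ 2 := by
        nlinarith [s1, mul_nonneg (by positivity : (0:ℝ) ≤ c / 2) (sq_nonneg D)]
      calc min (c ^ 2 * ε ^ 2 / (2 * L * C ^ 2)) (ε ^ 2 * c / (2 * C))
          ≤ ε ^ 2 * c / (2 * C) := min_le_right _ _
        _ ≤ c / 2 * ε * D := s3
        _ = c / 2 * (ε / D) * D ^ 2 := s2.symm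
        _ ≤ c / 2 * (ε / m) * D ^ 2 := s5
        _ = c / 2 * α * D ^ 2 := by rw [hαeq]
  linarith [hstep, hhalf, hbound]
end
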